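/- arXiv:2102.05762 — 2 statements merged into one kernel-verified Lean document; each statement's English description precedes it below -/
import Mathlib

section
/- Let Ω be a finite nonempty set, P : Ω → [0,1] a probability mass function with Σ_ω P(ω) = 1, Z : Ω → ℝ, and α ∈ (0,1]. Then CVaR_α(Z) = min over all ξ : Ω → ℝ with 0 ≤ ξ(ω) ≤ 1/α for all ω and Σ_ω ξ(ω)P(ω) = 1, of the ξ-weighted expectation Σ_ω ξ(ω)Z(ω)P(ω); moreover the minimum is attained. -/
/-- The cumulative distribution function `F(z) = Σ_{ω : Z ω ≤ z} P ω` on a finite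
probability space. -/
noncomputable def finCdf {Ω : Type*} [Fintype Ω] (P : Ω → ℝ) (Z : Ω → ℝ) (z : ℝ) : ℝ :=
  ∑ ω, if Z ω ≤ z then P ω else 0

/-- The value at risk `VaR_γ(Z) = inf {z | F z ≥ γ}`. -/
noncomputable def finVaR {Ω : Type*} [Fintype Ω] (P : Ω → ℝ) (Z : Ω → ℝ) (γ : ℝ) : ℝ :=
  sInf {z : ℝ | γ ≤ finCdf P Z z}

/-- The conditional value at risk `CVaR_α(Z) = (1/α) ∫_0^α VaR_γ(Z) dγ`. -/
noncomputable def finCVaR {Ω : Type*} [Fintype Ω] (P : Ω → ℝ) (Z : Ω → ℝ) (α : ℝ) : ℝ :=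
  (1 / α) * ∫ γ in (0 : ℝ)..α, finVaR P Z γ

set_option maxHeartbeats 1000000

open MeasureTheory Set

section aux
variable {Ω : Type*} [Fintype Ω] (P Z : Ω → ℝ)

lemma finCdf_mono (hP0 : ∀ ω, 0 ≤ P ω) : Monotone (finCdf P Z) := by
  intro a b hab
  refine Finset.sum_le_sum fun ω _ => ?_
  by_cases h : Z ω ≤ a
  · simp [h, h.trans hab]
  · by_cases h' : Z ω ≤ b <;> simp [h, h', hP0 ω]

lemma finCdf_nonneg (hP0 : ∀ ω, 0 ≤ P ω) (z : ℝ) : 0 ≤ finCdf P Z z :=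
  Finset.sum_nonneg fun ω _ => by by_cases h : Z ω ≤ z <;> simp [h, hP0 ω]

lemma finCdf_congr {z z' : ℝ} (h : ∀ ω, Z ω ≤ z ↔ Z ω ≤ z') :
    finCdf P Z z = finCdf P Z z' :=
  Finset.sum_congr rfl fun ω _ => if_congr (h ω) rfl rfl

lemma finCdf_top (hPsum : ∑ ω, P ω = 1) {M : ℝ} (hM : ∀ ω, Z ω ≤ M) :
    finCdf P Z M = 1 := by
  rw [← hPsum]; exact Finset.sum_congr rfl fun ω _ => by simp [hM ω]

variable [Nonempty Ω]

lemma finVaR_spec (hP0 : ∀ ω, 0 ≤ P ω) (hPsum : ∑ ω, P ω = 1)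
    {γ : ℝ} (hγ0 : 0 < γ) (hγ1 : γ ≤ 1) :
    γ ≤ finCdf P Z (finVaR P Z γ) ∧ (∀ z, γ ≤ finCdf P Z z → finVaR P Z γ ≤ z) ∧
      (∀ ω', (∀ ω, Z ω' ≤ Z ω) → Z ω' ≤ finVaR P Z γ) := by
  obtain ⟨ωM, -, hωM⟩ := Finset.exists_max_image Finset.univ Z Finset.univ_nonempty
  have hMem : γ ≤ finCdf P Z (Z ωM) := by
    rw [finCdf_top P Z hPsum (fun ω => hωM ω (Finset.mem_univ ω))]; exact hγ1
  set S := {z : ℝ | γ ≤ finCdf P Z z} with hS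
  have hSne : (Z ωM) ∈ S := hMem
  have hlb : ∀ ω', (∀ ω, Z ω' ≤ Z ω) → ∀ z ∈ S, Z ω' ≤ z := by
    intro ω' hω' z hz
    by_contra hc
    push_neg at hc
    have h0 : finCdf P Z z = 0 := Finset.sum_eq_zero fun ω _ => by
      have : ¬ Z ω ≤ z := not_le.2 (lt_of_lt_of_le hc (hω' ω))
      simp [this]
    have : γ ≤ (0:ℝ) := h0 ▸ hz
    exact absurd this (not_le.2 hγ0)
  obtain ⟨ωm, -, hωm'⟩ := Finset.exists_min_image Finset.univ Z Finset.univ_nonempty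
  have hωm : ∀ ω, Z ωm ≤ Z ω := fun ω => hωm' ω (Finset.mem_univ ω)
  have hbdd : BddBelow S := ⟨Z ωm, fun z hz => hlb ωm hωm z hz⟩
  set T := (Finset.univ.image Z).filter (fun z => γ ≤ finCdf P Z z) with hT
  have hTne : T.Nonempty :=
    ⟨Z ωM, Finset.mem_filter.2 ⟨Finset.mem_image_of_mem Z (Finset.mem_univ ωM), hMem⟩⟩
  have hkey : ∀ z ∈ S, ∃ z' ∈ T, z' ≤ z := by
    intro z hz
    have hpos : 0 < finCdf P Z z := lt_of_lt_of_le hγ0 hz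
    have hAne : (Finset.univ.filter (fun ω => Z ω ≤ z)).Nonempty := by
      by_contra hA
      rw [Finset.not_nonempty_iff_eq_empty] at hA
      have h0 : finCdf P Z z = 0 := Finset.sum_eq_zero fun ω _ => by
        have hn : ¬ Z ω ≤ z := by
          intro h
          have hmem : ω ∈ Finset.filter (fun ω => Z ω ≤ z) Finset.univ :=
            Finset.mem_filter.2 ⟨Finset.mem_univ ω, h⟩
          rw [hA] at hmem
          exact absurd hmem (Finset.notMem_empty ω)
        simp [hn]
      rw [h0] at hpos; exact lt_irrefl 0 hpos
    obtain ⟨ω', hω'A, hω'max⟩ := Finset.exists_max_image _ Z hAne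
    have hz'le : Z ω' ≤ z := (Finset.mem_filter.1 hω'A).2
    have hcdf : finCdf P Z (Z ω') = finCdf P Z z :=
      finCdf_congr P Z fun ω => ⟨fun h => h.trans hz'le,
        fun h => hω'max ω (Finset.mem_filter.2 ⟨Finset.mem_univ ω, h⟩)⟩
    exact ⟨Z ω', Finset.mem_filter.2 ⟨Finset.mem_image_of_mem Z (Finset.mem_univ ω'),
      by rw [hcdf]; exact hz⟩, hz'le⟩
  have hminS : (T.min' hTne) ∈ S := (Finset.mem_filter.1 (T.min'_mem hTne)).2
  have hinf : sInf S = T.min' hTne := by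
    refine le_antisymm (csInf_le hbdd hminS) (le_csInf ⟨_, hSne⟩ fun z hz => ?_)
    obtain ⟨z', hz'T, hz'le⟩ := hkey z hz
    exact (T.min'_le z' hz'T).trans hz'le
  refine ⟨?_, fun z hz => csInf_le hbdd hz, fun ω' hω' => le_csInf ⟨_, hSne⟩ (hlb ω' hω')⟩
  show γ ≤ finCdf P Z (sInf S)
  rw [hinf]; exact hminS

lemma finVaR_le_iff (hP0 : ∀ ω, 0 ≤ P ω) (hPsum : ∑ ω, P ω = 1)
    {γ s : ℝ} (hγ0 : 0 < γ) (hγ1 : γ ≤ 1) :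
    finVaR P Z γ ≤ s ↔ γ ≤ finCdf P Z s := by
  obtain ⟨h1, h2, -⟩ := finVaR_spec P Z hP0 hPsum hγ0 hγ1
  exact ⟨fun h => le_trans h1 (finCdf_mono P Z hP0 h), h2 s⟩

lemma finVaR_mono (hP0 : ∀ ω, 0 ≤ P ω) (hPsum : ∑ ω, P ω = 1)
    {γ γ' : ℝ} (hγ0 : 0 < γ) (hle : γ ≤ γ') (hγ1 : γ' ≤ 1) :
    finVaR P Z γ ≤ finVaR P Z γ' := by
  obtain ⟨h1, -, -⟩ := finVaR_spec P Z hP0 hPsum (lt_of_lt_of_le hγ0 hle) hγ1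
  exact (finVaR_le_iff P Z hP0 hPsum hγ0 (hle.trans hγ1)).2 (le_trans hle h1)


set_option maxHeartbeats 1000000 in
lemma finVaR_integral (hP0 : ∀ ω, 0 ≤ P ω) (hPsum : ∑ ω, P ω = 1)
    {α : ℝ} (hα0 : 0 < α) (hα1 : α ≤ 1) :
    ∫ γ in (0:ℝ)..α, finVaR P Z γ
      = α * finVaR P Z α + ∑ ω, P ω * min (Z ω - finVaR P Z α) 0 := by
  obtain ⟨ωm, -, hωm'⟩ := Finset.exists_min_image Finset.univ Z Finset.univ_nonempty
  obtain ⟨ωM, -, hωM'⟩ := Finset.exists_max_image Finset.univ Z Finset.univ_nonempty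
  set m := Z ωm with hm
  set M := Z ωM with hM
  have hωm : ∀ ω, m ≤ Z ω := fun ω => hωm' ω (Finset.mem_univ ω)
  have hωM : ∀ ω, Z ω ≤ M := fun ω => hωM' ω (Finset.mem_univ ω)
  set F := finCdf P Z with hF
  set c := finVaR P Z α with hc
  have hF1 : F M = 1 := finCdf_top P Z hPsum hωM
  have hFmono : Monotone F := finCdf_mono P Z hP0
  have hF0 : ∀ s, 0 ≤ F s := finCdf_nonneg P Z hP0
  have hvle : ∀ {γ s : ℝ}, 0 < γ → γ ≤ 1 → (finVaR P Z γ ≤ s ↔ γ ≤ F s) :=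
    fun hγ0 hγ1 => finVaR_le_iff P Z hP0 hPsum hγ0 hγ1
  have hcM : c ≤ M := (hvle hα0 hα1).2 (by rw [hF1]; exact hα1)
  have hmv : ∀ {γ : ℝ}, 0 < γ → γ ≤ 1 → m ≤ finVaR P Z γ :=
    fun hγ0 hγ1 => (finVaR_spec P Z hP0 hPsum hγ0 hγ1).2.2 ωm hωm
  have hmc : m ≤ c := hmv hα0 hα1
  have hmM : m ≤ M := hωm ωM
  have hvc : ∀ {γ : ℝ}, 0 < γ → γ ≤ α → finVaR P Z γ ≤ c :=
    fun hγ0 hγα => finVaR_mono P Z hP0 hPsum hγ0 hγα hα1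
  have hFmeas : Measurable F := hFmono.measurable
  set g : ℝ → ℝ := fun γ => if γ ≤ 0 then m else finVaR P Z (min γ α) with hg
  have hminmem : ∀ {γ : ℝ}, ¬ γ ≤ 0 → 0 < min γ α ∧ min γ α ≤ α := by
    intro γ h
    push_neg at h
    exact ⟨lt_min h hα0, min_le_right _ _⟩
  have hgmono : Monotone g := by
    intro a b hab
    by_cases hb : b ≤ 0
    · have ha : a ≤ 0 := hab.trans hb
      simp [hg, ha, hb]
    · by_cases ha : a ≤ 0
      · simp only [hg, if_pos ha, if_neg hb]
        exact hmv (hminmem hb).1 ((hminmem hb).2.trans hα1)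
      · simp only [hg, if_neg ha, if_neg hb]
        exact finVaR_mono P Z hP0 hPsum (hminmem ha).1
          (min_le_min hab le_rfl) ((hminmem hb).2.trans hα1)
  have hgmeas : Measurable g := hgmono.measurable
  have hge : ∀ γ ∈ Ioc (0:ℝ) α, finVaR P Z γ = g γ := by
    intro γ hγ
    simp only [hg, if_neg (not_le.2 hγ.1), min_eq_left hγ.2]
  have hgm : ∀ γ, m ≤ g γ := by
    intro γ
    by_cases h : γ ≤ 0
    · simp [hg, h]
    · simp only [hg, if_neg h]
      exact hmv (hminmem h).1 ((hminmem h).2.trans hα1)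
  have hgc : ∀ γ, g γ ≤ c := by
    intro γ
    by_cases h : γ ≤ 0
    · simp [hg, h, hmc]
    · simp only [hg, if_neg h]
      exact hvc (hminmem h).1 (hminmem h).2
  -- the product set
  set E : Set (ℝ × ℝ) := {p | p.1 ∈ Ioc (0:ℝ) α ∧ p.2 ∈ Ioc m M ∧ F p.2 < p.1} with hE
  have hEmeas : MeasurableSet E := by
    have hEeq : E = ((Ioc (0:ℝ) α) ×ˢ (Ioc m M)) ∩ {p : ℝ × ℝ | F p.2 < p.1} := by
      ext p
      simp only [hE, Set.mem_setOf_eq, Set.mem_inter_iff, Set.mem_prod]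
      tauto
    rw [hEeq]
    exact (measurableSet_Ioc.prod measurableSet_Ioc).inter
      (measurableSet_lt (hFmeas.comp measurable_snd) measurable_fst)
  have hL : (volume.prod volume) E = ∫⁻ γ in Ioc (0:ℝ) α, ENNReal.ofReal (g γ - m) := by
    rw [Measure.prod_apply hEmeas, ← lintegral_indicator measurableSet_Ioc]
    refine lintegral_congr fun γ => ?_
    by_cases hγ : γ ∈ Ioc (0:ℝ) α
    · have hslice : Prod.mk γ ⁻¹' E = Ioo m (finVaR P Z γ) := by
        ext s
        simp only [hE, Set.mem_preimage, Set.mem_setOf_eq, Set.mem_Ioc, Set.mem_Ioo]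
        constructor
        · rintro ⟨-, ⟨hs1, -⟩, hs3⟩
          refine ⟨hs1, not_le.1 fun hle => ?_⟩
          exact absurd ((hvle hγ.1 (hγ.2.trans hα1)).1 hle) (not_le.2 hs3)
        · rintro ⟨hs1, hs2⟩
          refine ⟨hγ, ⟨hs1, ?_⟩, ?_⟩
          · exact le_of_lt (lt_of_lt_of_le hs2 ((hvc hγ.1 hγ.2).trans hcM))
          · exact not_le.1 fun hle => absurd ((hvle hγ.1 (hγ.2.trans hα1)).2 hle) (not_le.2 hs2)
      rw [hslice, Real.volume_Ioo, Set.indicator_of_mem hγ, hge γ hγ]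
    · have hslice : Prod.mk γ ⁻¹' E = ∅ := by
        refine Set.eq_empty_iff_forall_notMem.2 fun s hs => ?_
        exact hγ hs.1
      rw [hslice, Set.indicator_of_notMem hγ]
      simp
  have hR : (volume.prod volume) E = ∫⁻ s in Ioc m M, ENNReal.ofReal (α - F s) := by
    rw [Measure.prod_apply_symm hEmeas, ← lintegral_indicator measurableSet_Ioc]
    refine lintegral_congr fun s => ?_
    by_cases hs : s ∈ Ioc m M
    · have hslice : (fun x => (x, s)) ⁻¹' E = Ioc (F s) α := by
        ext γ
        simp only [hE, Set.mem_preimage, Set.mem_setOf_eq, Set.mem_Ioc]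
        constructor
        · rintro ⟨⟨-, hγ2⟩, -, hγ3⟩
          exact ⟨hγ3, hγ2⟩
        · rintro ⟨hγ1, hγ2⟩
          exact ⟨⟨lt_of_le_of_lt (hF0 s) hγ1, hγ2⟩, hs, hγ1⟩
      rw [hslice, Real.volume_Ioc, Set.indicator_of_mem hs]
    · have hslice : (fun x => (x, s)) ⁻¹' E = ∅ := by
        refine Set.eq_empty_iff_forall_notMem.2 fun γ hγ => ?_
        exact hs hγ.2.1
      rw [hslice, Set.indicator_of_notMem hs]
      simp
  -- Bochner conversions
  have hIg : IntegrableOn g (Ioc (0:ℝ) α) :=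
    ((hgmono.monotoneOn _).integrableOn_isCompact isCompact_Icc).mono_set Ioc_subset_Icc_self
  have hminmono : Monotone (fun s => min (F s) α) := fun a b h => min_le_min (hFmono h) le_rfl
  have hIminMM : IntegrableOn (fun s => min (F s) α) (Ioc m M) :=
    ((hminmono.monotoneOn _).integrableOn_isCompact isCompact_Icc).mono_set Ioc_subset_Icc_self
  have hIminmc : IntegrableOn (fun s => min (F s) α) (Ioc m c) :=
    ((hminmono.monotoneOn _).integrableOn_isCompact isCompact_Icc).mono_set Ioc_subset_Icc_self
  have hImincM : IntegrableOn (fun s => min (F s) α) (Ioc c M) :=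
    ((hminmono.monotoneOn _).integrableOn_isCompact isCompact_Icc).mono_set Ioc_subset_Icc_self
  have h1 : ∫ γ in Ioc (0:ℝ) α, (g γ - m) = ((volume.prod volume) E).toReal := by
    rw [integral_eq_lintegral_of_nonneg_ae (ae_of_all _ fun γ => sub_nonneg.2 (hgm γ))
      ((hgmeas.sub measurable_const).aestronglyMeasurable), hL]
  have h2 : ∫ s in Ioc m M, (α - min (F s) α) = ((volume.prod volume) E).toReal := by
    rw [integral_eq_lintegral_of_nonneg_ae
      (ae_of_all _ fun s => sub_nonneg.2 (min_le_right _ _))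
      ((measurable_const.sub (hFmeas.min measurable_const)).aestronglyMeasurable), hR]
    congr 1
    refine lintegral_congr fun s => ?_
    rcases le_total (F s) α with h | h
    · rw [min_eq_left h]
    · rw [min_eq_right h]
      rw [sub_self, ENNReal.ofReal_zero, ENNReal.ofReal_of_nonpos (by linarith)]
  have h3 : ∫ γ in Ioc (0:ℝ) α, (g γ - m) = (∫ γ in Ioc (0:ℝ) α, g γ) - m * α := by
    rw [integral_sub hIg (integrableOn_const (by rw [Real.volume_Ioc]; exact ENNReal.ofReal_ne_top))]
    rw [setIntegral_const, measureReal_def, Real.volume_Ioc, ENNReal.toReal_ofReal (by linarith), smul_eq_mul]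
    ring
  have h4 : ∫ s in Ioc m M, (α - min (F s) α) = α * (M - m) - ∫ s in Ioc m M, min (F s) α := by
    rw [integral_sub (show IntegrableOn (fun _ : ℝ => α) (Ioc m M) volume from integrableOn_const (by rw [Real.volume_Ioc]; exact ENNReal.ofReal_ne_top)) hIminMM]
    rw [setIntegral_const, measureReal_def, Real.volume_Ioc, ENNReal.toReal_ofReal (by linarith), smul_eq_mul]
    ring
  have h5 : ∫ s in Ioc m M, min (F s) α
      = (∫ s in Ioc m c, min (F s) α) + ∫ s in Ioc c M, min (F s) α := by
    rw [← Set.Ioc_union_Ioc_eq_Ioc hmc hcM,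
      setIntegral_union (Set.Ioc_disjoint_Ioc_of_le le_rfl) measurableSet_Ioc hIminmc hImincM]
  have h6 : ∫ s in Ioc m c, min (F s) α = ∫ s in Ioc m c, F s := by
    refine setIntegral_congr_ae measurableSet_Ioc ?_
    refine (ae_iff.2 (measure_mono_null ?_ (Real.volume_singleton (a := c))))
    intro s hs
    simp only [Set.mem_setOf_eq] at hs
    push_neg at hs
    obtain ⟨hmem, hne⟩ := hs
    have hlt : α < F s := not_le.1 fun h => hne (min_eq_left h)
    have hcs : c ≤ s := (hvle hα0 hα1).2 hlt.le
    exact Set.mem_singleton_iff.2 (le_antisymm hmem.2 hcs)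
  have h7 : ∫ s in Ioc c M, min (F s) α = α * (M - c) := by
    rw [setIntegral_congr_fun measurableSet_Ioc
      (fun s hs => min_eq_right ((hvle hα0 hα1).1 hs.1.le))]
    rw [setIntegral_const, measureReal_def, Real.volume_Ioc, ENNReal.toReal_ofReal (by linarith), smul_eq_mul]
    ring
  have h8 : ∫ s in Ioc m c, F s = ∑ ω, P ω * max (c - Z ω) 0 := by
    have hFsum : ∀ s, F s = ∑ ω, if Z ω ≤ s then P ω else 0 := fun s => rfl
    have hInd : ∀ ω : Ω, (fun s : ℝ => if Z ω ≤ s then P ω else 0)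
        = (Ici (Z ω)).indicator (fun _ => P ω) := fun ω => funext fun s => by
      by_cases h : Z ω ≤ s <;> simp [Set.indicator, h]
    have hInt : ∀ ω ∈ Finset.univ,
        IntegrableOn (fun s : ℝ => if Z ω ≤ s then P ω else 0) (Ioc m c) := by
      intro ω _
      rw [hInd ω]
      have hconst : IntegrableOn (fun _ : ℝ => P ω) (Ioc m c) :=
        integrableOn_const (by rw [Real.volume_Ioc]; exact ENNReal.ofReal_ne_top)
      exact hconst.indicator measurableSet_Ici
    simp only [hFsum]
    rw [integral_finset_sum _ hInt]
    refine Finset.sum_congr rfl fun ω _ => ?_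
    rw [hInd ω, setIntegral_indicator measurableSet_Ici, setIntegral_const, measureReal_def]
    have hvol : volume (Ioc m c ∩ Ici (Z ω)) = ENNReal.ofReal (c - Z ω) := by
      apply le_antisymm
      · refine le_trans (measure_mono (fun x hx => ?_)) (le_of_eq (Real.volume_Icc (a := Z ω) (b := c)))
        exact ⟨hx.2, hx.1.2⟩
      · refine le_trans (le_of_eq (Real.volume_Ioc (a := Z ω) (b := c)).symm) (measure_mono (fun x hx => ?_))
        exact ⟨⟨lt_of_le_of_lt (hωm ω) hx.1, hx.2⟩, hx.1.le⟩
    rw [hvol, smul_eq_mul, ENNReal.toReal_ofReal']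
    ring
  -- assemble
  have hIoc : ∫ γ in (0:ℝ)..α, finVaR P Z γ = ∫ γ in Ioc (0:ℝ) α, g γ := by
    rw [intervalIntegral.integral_of_le hα0.le]
    exact setIntegral_congr_fun measurableSet_Ioc hge
  have hQ : ∑ ω, P ω * min (Z ω - c) 0 = - ∑ ω, P ω * max (c - Z ω) 0 := by
    rw [← Finset.sum_neg_distrib]
    refine Finset.sum_congr rfl fun ω _ => ?_
    have : min (Z ω - c) 0 = - max (c - Z ω) 0 := by
      rcases le_total (Z ω) c with h | h
      · rw [min_eq_left (by linarith), max_eq_left (by linarith)]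
        ring
      · rw [min_eq_right (by linarith), max_eq_right (by linarith)]
        ring
    rw [this]
    ring
  rw [hIoc, hQ]
  have hEq : (∫ γ in Ioc (0:ℝ) α, g γ) - m * α = α * (M - m) - ∫ s in Ioc m M, min (F s) α := by
    rw [← h3, ← h4, h1, h2]
  rw [h5, h6, h7, h8] at hEq
  linarith

end aux

/-- **Dual (risk-envelope) representation of CVaR on a finite probability space.**
Let `Ω` be a finite nonempty set, `P : Ω → [0,1]` a probability mass function with
`Σ_ω P ω = 1`, `Z : Ω → ℝ`, and `α ∈ (0,1]`.  Then `CVaR_α(Z)` is the minimum — and the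
minimum is attained — over all densities `ξ : Ω → ℝ` with `0 ≤ ξ ω ≤ 1/α` and
`Σ_ω ξ ω * P ω = 1`, of the `ξ`-weighted expectation `Σ_ω ξ ω * Z ω * P ω`. -/
theorem cvar_dual_representation_finite
    {Ω : Type*} [Fintype Ω] [Nonempty Ω]
    (P : Ω → ℝ) (hP : ∀ ω, P ω ∈ Set.Icc (0 : ℝ) 1) (hPsum : ∑ ω, P ω = 1)
    (Z : Ω → ℝ) (α : ℝ) (hα : α ∈ Set.Ioc (0 : ℝ) 1) :
    IsLeast
      { v : ℝ | ∃ ξ : Ω → ℝ,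
          (∀ ω, 0 ≤ ξ ω ∧ ξ ω ≤ 1 / α) ∧
          (∑ ω, ξ ω * P ω = 1) ∧
          v = ∑ ω, ξ ω * Z ω * P ω }
      (finCVaR P Z α) := by
  obtain ⟨hα0, hα1⟩ := hα
  have hα' : α ≠ 0 := ne_of_gt hα0
  have hP0 : ∀ ω, 0 ≤ P ω := fun ω => (hP ω).1
  set c := finVaR P Z α with hc
  have hspec := finVaR_spec P Z hP0 hPsum hα0 hα1
  have hFc : α ≤ finCdf P Z c := hspec.1
  have hCV : finCVaR P Z α = c + (1/α) * ∑ ω, P ω * min (Z ω - c) 0 := by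
    rw [finCVaR, finVaR_integral P Z hP0 hPsum hα0 hα1, ← hc]
    field_simp
  set pm := ∑ ω, if Z ω < c then P ω else 0 with hpm
  set p0 := ∑ ω, if Z ω = c then P ω else 0 with hp0
  have hsum1 : pm + p0 = finCdf P Z c := by
    rw [hpm, hp0, ← Finset.sum_add_distrib]
    refine Finset.sum_congr rfl fun ω _ => ?_
    rcases lt_trichotomy (Z ω) c with h | h | h
    · simp [h, ne_of_lt h, le_of_lt h]
    · simp [h]
    · simp [not_lt.2 h.le, ne_of_gt h, not_le.2 h]
  have hpmlt : pm < α := by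
    by_cases hA : (Finset.univ.filter (fun ω => Z ω < c)).Nonempty
    · obtain ⟨ω', hω'A, hω'max⟩ := Finset.exists_max_image _ Z hA
      have hz' : Z ω' < c := (Finset.mem_filter.1 hω'A).2
      have hpmF : pm = finCdf P Z (Z ω') := by
        rw [show finCdf P Z (Z ω') = ∑ ω, if Z ω ≤ Z ω' then P ω else 0 from rfl, hpm]
        refine Finset.sum_congr rfl fun ω _ => ?_
        refine if_congr ⟨fun h => hω'max ω (Finset.mem_filter.2 ⟨Finset.mem_univ ω, h⟩),
               fun h => lt_of_le_of_lt h hz'⟩ rfl rfl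
      rw [hpmF]
      by_contra hcon
      push_neg at hcon
      exact absurd ((finVaR_le_iff P Z hP0 hPsum hα0 hα1).2 hcon) (not_le.2 hz')
    · rw [Finset.not_nonempty_iff_eq_empty] at hA
      have hz : pm = 0 := Finset.sum_eq_zero fun ω _ => by
        have hn : ¬ Z ω < c := by
          intro h
          have hmem : ω ∈ Finset.univ.filter (fun ω => Z ω < c) :=
            Finset.mem_filter.2 ⟨Finset.mem_univ ω, h⟩
          rw [hA] at hmem
          exact absurd hmem (Finset.notMem_empty ω)
        simp [hn]
      rw [hz]; exact hα0
  have hp0pos : 0 < p0 := by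
    have h1 : α - pm ≤ p0 := by linarith [hFc, hsum1.symm ▸ hFc]
    linarith
  have hp0' : p0 ≠ 0 := ne_of_gt hp0pos
  set lam := (α - pm) / (α * p0) with hlam
  have hlam0 : 0 ≤ lam := div_nonneg (by linarith) (by positivity)
  have hlamle : lam ≤ 1/α := by
    rw [hlam, div_le_div_iff₀ (by positivity) hα0]
    have h1 : α ≤ pm + p0 := le_trans hFc (le_of_eq hsum1.symm)
    nlinarith
  set ξ : Ω → ℝ := fun ω => if Z ω < c then 1/α else if Z ω = c then lam else 0 with hξ
  have hξb : ∀ ω, 0 ≤ ξ ω ∧ ξ ω ≤ 1/α := by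
    intro ω
    rw [hξ]
    simp only
    rcases lt_trichotomy (Z ω) c with h | h | h
    · rw [if_pos h]
      exact ⟨by positivity, le_rfl⟩
    · rw [if_neg (by simp [h]), if_pos h]
      exact ⟨hlam0, hlamle⟩
    · rw [if_neg (not_lt.2 h.le), if_neg (ne_of_gt h)]
      exact ⟨le_rfl, by positivity⟩
  have hξP : ∑ ω, ξ ω * P ω = 1 := by
    have hterm : ∀ ω, ξ ω * P ω
        = (1/α) * (if Z ω < c then P ω else 0) + lam * (if Z ω = c then P ω else 0) := by
      intro ω
      rw [hξ]
      simp only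
      rcases lt_trichotomy (Z ω) c with h | h | h
      · rw [if_pos h, if_pos h, if_neg (ne_of_lt h)]; ring
      · rw [if_neg (by simp [h]), if_pos h, if_neg (by simp [h]), if_pos h]; ring
      · rw [if_neg (not_lt.2 h.le), if_neg (ne_of_gt h), if_neg (not_lt.2 h.le),
          if_neg (ne_of_gt h)]; ring
    rw [Finset.sum_congr rfl (fun ω _ => hterm ω), Finset.sum_add_distrib,
      ← Finset.mul_sum, ← Finset.mul_sum, ← hpm, ← hp0, hlam]
    field_simp
    ring
  set S1 := ∑ ω, (if Z ω < c then Z ω * P ω else 0) with hS1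
  have hval : ∑ ω, ξ ω * Z ω * P ω = (1/α) * S1 + (lam * c) * p0 := by
    have hterm : ∀ ω, ξ ω * Z ω * P ω
        = (1/α) * (if Z ω < c then Z ω * P ω else 0)
          + (lam * c) * (if Z ω = c then P ω else 0) := by
      intro ω
      rw [hξ]
      simp only
      rcases lt_trichotomy (Z ω) c with h | h | h
      · rw [if_pos h, if_pos h, if_neg (ne_of_lt h)]; ring
      · rw [if_neg (by simp [h]), if_pos h, if_neg (by simp [h]), if_pos h, h]; ring
      · rw [if_neg (not_lt.2 h.le), if_neg (ne_of_gt h), if_neg (not_lt.2 h.le),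
          if_neg (ne_of_gt h)]; ring
    rw [Finset.sum_congr rfl (fun ω _ => hterm ω), Finset.sum_add_distrib,
      ← Finset.mul_sum, ← Finset.mul_sum, ← hS1, ← hp0]
  have hminsum : ∑ ω, P ω * min (Z ω - c) 0 = S1 - c * pm := by
    have hterm : ∀ ω, P ω * min (Z ω - c) 0
        = (if Z ω < c then Z ω * P ω else 0) - c * (if Z ω < c then P ω else 0) := by
      intro ω
      rcases lt_or_ge (Z ω) c with h | h
      · rw [if_pos h, if_pos h, min_eq_left (by linarith)]; ring
      · rw [if_neg (not_lt.2 h), if_neg (not_lt.2 h), min_eq_right (by linarith)]; ring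
    rw [Finset.sum_congr rfl (fun ω _ => hterm ω), Finset.sum_sub_distrib,
      ← Finset.mul_sum, ← hS1, ← hpm]
  constructor
  · refine ⟨ξ, hξb, hξP, ?_⟩
    rw [hCV, hval, hminsum, hlam]
    field_simp
    ring
  · rintro v ⟨ξ', hb', hsum', rfl⟩
    rw [hCV]
    have hrw : ∑ ω, ξ' ω * Z ω * P ω = c + ∑ ω, ξ' ω * (Z ω - c) * P ω := by
      have hterm : ∀ ω, ξ' ω * (Z ω - c) * P ω
          = ξ' ω * Z ω * P ω - c * (ξ' ω * P ω) := fun ω => by ring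
      rw [Finset.sum_congr rfl (fun ω _ => hterm ω), Finset.sum_sub_distrib,
        ← Finset.mul_sum, hsum']
      ring
    rw [hrw, Finset.mul_sum]
    refine add_le_add_right (Finset.sum_le_sum fun ω _ => ?_) c
    rcases le_or_gt c (Z ω) with h | h
    · rw [min_eq_right (by linarith)]
      rw [mul_zero, mul_zero]
      exact mul_nonneg (mul_nonneg (hb' ω).1 (sub_nonneg.2 h)) (hP0 ω)
    · rw [min_eq_left (by linarith)]
      have h1 : ξ' ω ≤ 1/α := (hb' ω).2
      have h2 : 0 ≤ P ω := hP0 ω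
      have key : 0 ≤ ((1/α - ξ' ω) * (c - Z ω)) * P ω :=
        mul_nonneg (mul_nonneg (by linarith) (by linarith)) h2
      nlinarith [key]
end

section
/- Let Z be an integrable real-valued random variable whose cumulative distribution function F is continuous, and let α ∈ (0,1). Then P(Z ≤ VaR_α(Z)) = α and CVaR_α(Z) = E[Z · 1{Z ≤ VaR_α(Z)}]/α, i.e. CVaR_α(Z) equals the conditional expectation E[Z | Z ≤ VaR_α(Z)]. -/
open MeasureTheory

variable {Ω : Type*} [MeasurableSpace Ω]

/-- The cumulative distribution function `F(z) = P(Z ≤ z)` of a real random variable. -/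
noncomputable def cdf (μ : Measure Ω) (Z : Ω → ℝ) (z : ℝ) : ℝ :=
  (μ {ω | Z ω ≤ z}).toReal

/-- The value at risk `VaR_γ(Z) = inf {z | F z ≥ γ}` at confidence level `γ`. -/
noncomputable def vaR (μ : Measure Ω) (Z : Ω → ℝ) (γ : ℝ) : ℝ :=
  sInf {z : ℝ | γ ≤ cdf μ Z z}

/-- The conditional value at risk `CVaR_α(Z) = (1/α) ∫_0^α VaR_γ(Z) dγ`. -/
noncomputable def cvar (μ : Measure Ω) (Z : Ω → ℝ) (α : ℝ) : ℝ :=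
  (1 / α) * ∫ γ in (0 : ℝ)..α, vaR μ Z γ

section aux

variable (μ : Measure Ω) [IsProbabilityMeasure μ] (Z : Ω → ℝ)

omit [IsProbabilityMeasure μ] in
lemma cdf_eq_map (hZm : Measurable Z) (z : ℝ) : cdf μ Z z = ((μ.map Z) (Set.Iic z)).toReal := by
  rw [Measure.map_apply hZm measurableSet_Iic]
  rfl

lemma cdf_eq_pt_cdf (hZm : Measurable Z) (z : ℝ) : cdf μ Z z = ProbabilityTheory.cdf (μ.map Z) z := by
  haveI : IsProbabilityMeasure (μ.map Z) := Measure.isProbabilityMeasure_map hZm.aemeasurable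
  rw [ProbabilityTheory.cdf_eq_real (μ.map Z) z, measureReal_def, cdf_eq_map μ Z hZm]

lemma cdf_mono : Monotone (cdf μ Z) := fun x y hxy => by
  have := measure_mono (μ := μ) (fun ω (h : Z ω ≤ x) => le_trans h hxy)
  exact ENNReal.toReal_mono (measure_ne_top μ _) this

lemma cdf_tendsto_atBot (hZm : Measurable Z) : Filter.Tendsto (cdf μ Z) Filter.atBot (nhds 0) := by
  have : cdf μ Z = ProbabilityTheory.cdf (μ.map Z) := funext (cdf_eq_pt_cdf μ Z hZm)
  rw [this]; exact ProbabilityTheory.tendsto_cdf_atBot _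

lemma cdf_tendsto_atTop (hZm : Measurable Z) : Filter.Tendsto (cdf μ Z) Filter.atTop (nhds 1) := by
  have : cdf μ Z = ProbabilityTheory.cdf (μ.map Z) := funext (cdf_eq_pt_cdf μ Z hZm)
  rw [this]; exact ProbabilityTheory.tendsto_cdf_atTop _

lemma var_set_nonempty (hZm : Measurable Z) {γ : ℝ} (hγ : γ < 1) : {z : ℝ | γ ≤ cdf μ Z z}.Nonempty := by
  obtain ⟨z, hz⟩ := ((cdf_tendsto_atTop μ Z hZm).eventually (eventually_gt_nhds hγ)).exists
  exact ⟨z, hz.le⟩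

lemma var_set_bddBelow (hZm : Measurable Z) {γ : ℝ} (hγ : 0 < γ) : BddBelow {z : ℝ | γ ≤ cdf μ Z z} := by
  obtain ⟨z0, hz0⟩ := ((cdf_tendsto_atBot μ Z hZm).eventually (eventually_lt_nhds hγ)).exists
  refine ⟨z0, fun z hz => ?_⟩
  by_contra h
  push_neg at h
  exact absurd (le_trans hz (cdf_mono μ Z h.le)) (not_le.2 hz0)

lemma cdf_vaR (hZm : Measurable Z) (hFcont : Continuous (cdf μ Z)) {γ : ℝ} (hγ : γ ∈ Set.Ioo (0:ℝ) 1) :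
    cdf μ Z (vaR μ Z γ) = γ := by
  have hne := var_set_nonempty μ Z hZm hγ.2
  have hbdd := var_set_bddBelow μ Z hZm hγ.1
  have hclosed : IsClosed {z : ℝ | γ ≤ cdf μ Z z} := isClosed_Ici.preimage hFcont
  have hmem : vaR μ Z γ ∈ {z : ℝ | γ ≤ cdf μ Z z} := hclosed.csInf_mem hne hbdd
  refine le_antisymm ?_ hmem
  -- find z0 with cdf z0 = γ via IVT
  obtain ⟨z1, hz1⟩ := ((cdf_tendsto_atBot μ Z hZm).eventually (eventually_lt_nhds hγ.1)).exists
  obtain ⟨z2, hz2⟩ := ((cdf_tendsto_atTop μ Z hZm).eventually (eventually_gt_nhds hγ.2)).exists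
  have h12 : z1 ≤ z2 := by
    by_contra h
    push_neg at h
    exact absurd (cdf_mono μ Z h.le) (not_le.2 (lt_trans hz1 hz2))
  obtain ⟨z0, -, hz0⟩ := intermediate_value_Icc h12 hFcont.continuousOn ⟨hz1.le, hz2.le⟩
  have : vaR μ Z γ ≤ z0 := csInf_le hbdd (by simp [Set.mem_setOf_eq, hz0.ge])
  calc cdf μ Z (vaR μ Z γ) ≤ cdf μ Z z0 := cdf_mono μ Z this
    _ = γ := hz0

lemma vaR_le_iff (hZm : Measurable Z) (hFcont : Continuous (cdf μ Z)) {γ : ℝ} (hγ : γ ∈ Set.Ioo (0:ℝ) 1) (z : ℝ) :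
    vaR μ Z γ ≤ z ↔ γ ≤ cdf μ Z z := by
  constructor
  · intro h
    calc γ = cdf μ Z (vaR μ Z γ) := (cdf_vaR μ Z hZm hFcont hγ).symm
      _ ≤ cdf μ Z z := cdf_mono μ Z h
  · intro h
    exact csInf_le (var_set_bddBelow μ Z hZm hγ.1) h

lemma vaR_monotoneOn (hZm : Measurable Z) : MonotoneOn (vaR μ Z) (Set.Ioo (0:ℝ) 1) := by
  intro γ hγ γ' hγ' hle
  exact csInf_le_csInf (var_set_bddBelow μ Z hZm hγ.1) (var_set_nonempty μ Z hZm hγ'.2)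
    (fun z hz => le_trans hle hz)

end aux

/-- **CVaR is the expected value of the left tail for continuous distributions.**
Let `Z` be an integrable real-valued random variable whose cumulative distribution function
is continuous and let `α ∈ (0,1)`.  Then `P(Z ≤ VaR_α(Z)) = α` and
`CVaR_α(Z) = E[Z · 1{Z ≤ VaR_α(Z)}] / α`, i.e. `CVaR_α(Z)` is the expectation of `Z`
conditional on `Z ≤ VaR_α(Z)`. -/
theorem cvar_eq_tail_expectation
    (μ : Measure Ω) [IsProbabilityMeasure μ]
    (Z : Ω → ℝ) (hZm : Measurable Z) (hZint : Integrable Z μ)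
    (hFcont : Continuous (cdf μ Z))
    (α : ℝ) (hα : α ∈ Set.Ioo (0 : ℝ) 1) :
    (μ {ω | Z ω ≤ vaR μ Z α}).toReal = α ∧
    cvar μ Z α = (∫ ω in {ω | Z ω ≤ vaR μ Z α}, Z ω ∂μ) / α := by
  set a := vaR μ Z α with ha
  have h1 : (μ {ω | Z ω ≤ a}).toReal = α := cdf_vaR μ Z hZm hFcont hα
  refine ⟨h1, ?_⟩
  have hss : Set.Ioo (0:ℝ) α ⊆ Set.Ioo (0:ℝ) 1 :=
    Set.Ioo_subset_Ioo le_rfl hα.2.le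
  have hqmeas : AEMeasurable (vaR μ Z) (volume.restrict (Set.Ioo 0 α)) :=
    aemeasurable_restrict_of_monotoneOn measurableSet_Ioo
      ((vaR_monotoneOn μ Z hZm).mono hss)
  -- key measure identity
  have hmapfin : IsFiniteMeasure ((volume.restrict (Set.Ioo (0:ℝ) α)).map (vaR μ Z)) := by
    constructor
    rw [Measure.map_apply_of_aemeasurable hqmeas MeasurableSet.univ]
    exact lt_of_le_of_lt (measure_mono (Set.subset_univ _))
      (by simp [Real.volume_Ioo])
  have hkey : (volume.restrict (Set.Ioo (0:ℝ) α)).map (vaR μ Z)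
      = (μ.map Z).restrict (Set.Iic a) := by
    haveI := hmapfin
    refine Measure.ext_of_Iic _ _ ?_
    intro z
    have hZfin : IsProbabilityMeasure (μ.map Z) := Measure.isProbabilityMeasure_map hZm.aemeasurable
    rw [Measure.map_apply_of_aemeasurable hqmeas measurableSet_Iic,
      Measure.restrict_apply measurableSet_Iic, Measure.restrict_apply' measurableSet_Ioo]
    have hset : vaR μ Z ⁻¹' Set.Iic z ∩ Set.Ioo 0 α
        = Set.Iic (cdf μ Z z) ∩ Set.Ioo 0 α := by
      ext γ
      simp only [Set.mem_inter_iff, Set.mem_preimage, Set.mem_Iic, and_congr_left_iff]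
      intro hγ
      exact vaR_le_iff μ Z hZm hFcont (hss hγ) z
    have hIic : (μ.map Z) (Set.Iic z ∩ Set.Iic a) = ENNReal.ofReal (min (cdf μ Z z) α) := by
      rw [Set.Iic_inter_Iic]
      have h1' : cdf μ Z a = α := h1
      have hmin : cdf μ Z (min z a) = min (cdf μ Z z) α := by
        rw [(cdf_mono μ Z).map_min, h1']
      rw [← hmin, cdf_eq_map μ Z hZm, ENNReal.ofReal_toReal (measure_ne_top _ _)]
    rw [hset, hIic]
    have h0F : 0 ≤ cdf μ Z z := ENNReal.toReal_nonneg
    rcases le_or_gt α (cdf μ Z z) with hc | hc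
    · have : Set.Iic (cdf μ Z z) ∩ Set.Ioo (0:ℝ) α = Set.Ioo 0 α :=
        Set.inter_eq_right.2 (fun γ hγ => le_trans hγ.2.le hc)
      rw [this, Real.volume_Ioo, min_eq_right hc]
      simp
    · have : Set.Iic (cdf μ Z z) ∩ Set.Ioo (0:ℝ) α = Set.Ioc 0 (cdf μ Z z) := by
        ext γ
        simp only [Set.mem_inter_iff, Set.mem_Iic, Set.mem_Ioo, Set.mem_Ioc]
        constructor
        · rintro ⟨h1, h2, h3⟩; exact ⟨h2, h1⟩
        · rintro ⟨h1, h2⟩; exact ⟨h2, h1, lt_of_le_of_lt h2 hc⟩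
      rw [this, Real.volume_Ioc, min_eq_left hc.le]
      simp
  -- now the integral computation
  have hint : ∫ γ in (0:ℝ)..α, vaR μ Z γ = ∫ ω in {ω | Z ω ≤ a}, Z ω ∂μ := by
    rw [intervalIntegral.integral_of_le hα.1.le]
    have e1 : ∫ x, x ∂((volume.restrict (Set.Ioo (0:ℝ) α)).map (vaR μ Z))
        = ∫ γ in Set.Ioo (0:ℝ) α, vaR μ Z γ :=
      integral_map hqmeas aestronglyMeasurable_id
    have e2 : ∫ x in Set.Iic a, x ∂(μ.map Z) = ∫ ω in Z ⁻¹' Set.Iic a, Z ω ∂μ :=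
      setIntegral_map measurableSet_Iic aestronglyMeasurable_id hZm.aemeasurable
    have e3 : ∫ ω in Z ⁻¹' Set.Iic a, Z ω ∂μ = ∫ ω in {ω | Z ω ≤ a}, Z ω ∂μ := rfl
    rw [integral_Ioc_eq_integral_Ioo, ← e1, hkey, ← e3, ← e2]
  rw [cvar, hint, one_div, inv_mul_eq_div]
end
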